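/- Let (s_n)_{n≥1} ⊆ (0,1) satisfy s_2 < 1 - s_1/(1 - s_1) and s_n ≤ s_{n-2}/2 - 2·s_{n-1} for all n ≥ 3, and define c_n := 1 - s_n for n odd and c_n := s_n for n even, with a_n := 1 - c_n. Then for every N ≥ 2 and every n with 1 ≤ n ≤ N-1, one has c_{2n+1}·a_{2n} < (c_{2N+1}·a_{2N})²·a_{2n}. -/
import Mathlib


theorem stmt16 (s c a : ℕ → ℝ)
    (hs : ∀ n, 1 ≤ n → s n ∈ Set.Ioo (0 : ℝ) 1)
    (h1 : s 2 < 1 - s 1 / (1 - s 1))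
    (h2 : ∀ n, 3 ≤ n → s n ≤ s (n - 2) / 2 - 2 * s (n - 1))
    (hcodd : ∀ n, 1 ≤ n → Odd n → c n = 1 - s n)
    (hceven : ∀ n, 1 ≤ n → Even n → c n = s n)
    (ha : ∀ n, a n = 1 - c n) :
    ∀ N n : ℕ, 2 ≤ N → 1 ≤ n → n ≤ N - 1 →
      c (2 * n + 1) * a (2 * n) < (c (2 * N + 1) * a (2 * N)) ^ 2 * a (2 * n) := by
  have hdec : ∀ m, 2 ≤ m → s m < s (m - 1) / 4 := by
    intro m hm
    have h2m := h2 (m + 1) (by omega)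
    have e1 : m + 1 - 2 = m - 1 := by omega
    have e2 : m + 1 - 1 = m := by omega
    rw [e1, e2] at h2m
    have hpos := (hs (m + 1) (by omega)).1
    linarith
  have hmono : ∀ k j, 2 ≤ k → s (k + j) ≤ s k := by
    intro k j hk
    induction j with
    | zero => simp
    | succ j ih =>
      have hd := hdec (k + j + 1) (by omega)
      have e : k + j + 1 - 1 = k + j := by omega
      rw [e] at hd
      have hp := (hs (k + j) (by omega)).1
      have : s (k + (j + 1)) = s (k + j + 1) := by ring_nf
      rw [this]
      linarith
  intro N n hN hn hnN
  -- rewrite c and a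
  have hc1 : c (2 * n + 1) = 1 - s (2 * n + 1) :=
    hcodd _ (by omega) ⟨n, by ring⟩
  have hc2 : c (2 * N + 1) = 1 - s (2 * N + 1) :=
    hcodd _ (by omega) ⟨N, by ring⟩
  have hcn : c (2 * n) = s (2 * n) := hceven _ (by omega) ⟨n, by ring⟩
  have hcN : c (2 * N) = s (2 * N) := hceven _ (by omega) ⟨N, by ring⟩
  have han : a (2 * n) = 1 - s (2 * n) := by rw [ha, hcn]
  have haN : a (2 * N) = 1 - s (2 * N) := by rw [ha, hcN]
  rw [hc1, hc2, han, haN]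
  -- key numeric facts
  have hw := hs (2 * n + 1) (by omega)
  have hv := hs (2 * N) (by omega)
  have hu := hs (2 * N + 1) (by omega)
  have h2n := hs (2 * n) (by omega)
  obtain ⟨hw0, hw1⟩ := hw
  obtain ⟨hv0, hv1⟩ := hv
  obtain ⟨hu0, hu1⟩ := hu
  obtain ⟨h2n0, h2n1⟩ := h2n
  -- s (2N) ≤ s (2n+2) < s(2n+1)/4
  have hvb : s (2 * N) < s (2 * n + 1) / 4 := by
    have hm : s (2 * n + 2 + (2 * N - (2 * n + 2))) ≤ s (2 * n + 2) :=
      hmono (2 * n + 2) (2 * N - (2 * n + 2)) (by omega)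
    have e : 2 * n + 2 + (2 * N - (2 * n + 2)) = 2 * N := by omega
    rw [e] at hm
    have hd := hdec (2 * n + 2) (by omega)
    have e2 : 2 * n + 2 - 1 = 2 * n + 1 := by omega
    rw [e2] at hd
    linarith
  have hub : s (2 * N + 1) < s (2 * N) / 4 := by
    have hd := hdec (2 * N + 1) (by omega)
    have e : 2 * N + 1 - 1 = 2 * N := by omega
    rw [e] at hd
    exact hd
  set u := s (2 * N + 1)
  set v := s (2 * N)
  set w := s (2 * n + 1)
  have hpos : (0 : ℝ) < 1 - s (2 * n) := by linarith
  have key : 1 - w < ((1 - u) * (1 - v)) ^ 2 := by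
    nlinarith [sq_nonneg (u + v - u * v), sq_nonneg (u * v), mul_pos hu0 hv0,
      mul_nonneg (mul_nonneg hu0.le hv0.le) (mul_nonneg hu0.le hv0.le)]
  nlinarith [mul_pos (mul_pos (by linarith : (0:ℝ) < 1 - u) (by linarith : (0:ℝ) < 1 - v)) hpos]
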